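/- Let Q = {x ∈ ℝⁿ : Ax ≤ b} be a nonempty polyhedron, z ∈ vrt(Q) a nondegenerate vertex (exactly n active constraints, with A_{J(z)} invertible), T = N(z), and let S = S_T ∈ ℝ^{n×n} be the invertible matrix whose rows are the inward unit facet normals of T (the normalized columns of A_{J(z)}^{−1}). Let ψ be proper convex and ε ≥ 0. Then for any w ∈ ∂(εψ)(z), with representer w̃ := S^{−1}(Sw)₊, γ(T ∩ [T + ∂(εψ)(z)]) ≥ γ(T) · exp(−½‖w̃‖² − ‖w̃‖√n). If moreover ψ is differentiable at z, then with w̃ := S^{−1}[S(ε∇ψ(z))]₊, γ(T ∩ [T + ε∇ψ(z)]) ≤ γ(T) · exp(−½‖proj_{T*} w̃‖² + dist(w̃, T*)·√n). -/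

import Mathlib

open MeasureTheory Set Metric Pointwise RealInnerProductSpace

noncomputable section

/-- Normal cone of a convex set `Q` at a point `z`. -/
def normalCone {n : ℕ} (Q : Set (EuclideanSpace ℝ (Fin n))) (z : EuclideanSpace ℝ (Fin n)) :
    Set (EuclideanSpace ℝ (Fin n)) :=
  {v | ∀ y ∈ Q, ⟪v, y - z⟫ ≤ 0}

/-- Dual cone of a set. -/
def dualCone {n : ℕ} (V : Set (EuclideanSpace ℝ (Fin n))) : Set (EuclideanSpace ℝ (Fin n)) :=
  {y | ∀ x ∈ V, 0 ≤ ⟪x, y⟫}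

/-- Standard Gaussian measure of a set in `ℝⁿ`. -/
def gauss {n : ℕ} (B : Set (EuclideanSpace ℝ (Fin n))) : ℝ :=
  ∫ x in B, (2 * Real.pi) ^ (-(n : ℝ) / 2) * Real.exp (-‖x‖ ^ 2 / 2)

/-- Subdifferential at `z` of the proper convex function equal to `ψ` on `D` and `+∞` off `D`. -/
def subdiff {n : ℕ} (D : Set (EuclideanSpace ℝ (Fin n))) (ψ : EuclideanSpace ℝ (Fin n) → ℝ)
    (z : EuclideanSpace ℝ (Fin n)) : Set (EuclideanSpace ℝ (Fin n)) :=
  {w | z ∈ D ∧ ∀ y ∈ D, ψ z + ⟪w, y - z⟫ ≤ ψ y}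

/-- `∂(εψ)(z)`: equals `ε ∂ψ(z)` for `ε > 0` and the normal cone of `dom ψ = D` at `z`
for `ε = 0`. -/
def subdiffScaled {n : ℕ} (ε : ℝ) (D : Set (EuclideanSpace ℝ (Fin n)))
    (ψ : EuclideanSpace ℝ (Fin n) → ℝ) (z : EuclideanSpace ℝ (Fin n)) :
    Set (EuclideanSpace ℝ (Fin n)) :=
  if ε = 0 then {w | z ∈ D ∧ ∀ y ∈ D, ⟪w, y - z⟫ ≤ 0}
  else (fun w => ε • w) '' subdiff D ψ z

section KTheoryAux

open Real Filter

/-- The auxiliary one-dimensional integral family `∫_0^∞ r^k e^{-(r-t)^2/2} dr`. -/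
def Kk (k : ℕ) (t : ℝ) : ℝ := ∫ r in Ioi (0:ℝ), r ^ k * Real.exp (-(r - t) ^ 2 / 2)



/-- The auxiliary integral family. -/

lemma Kk_cont (k : ℕ) (t : ℝ) : Continuous fun r : ℝ => r ^ k * Real.exp (-(r - t) ^ 2 / 2) := by
  fun_prop

lemma Kk_core_bound (k : ℕ) {c r : ℝ} (hc : 0 ≤ c) (hr : 0 ≤ r) :
    r ^ k * Real.exp (c * r - r ^ 2 / 2) ≤
      (k.factorial : ℝ) * Real.exp ((c + 1) ^ 2) * Real.exp (-(1/4) * r ^ 2) := by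
  have h1 : r ^ k ≤ (k.factorial : ℝ) * Real.exp r := by
    have := Real.pow_div_factorial_le_exp r hr k
    have hkf : (0:ℝ) < k.factorial := by positivity
    calc r ^ k = r ^ k / k.factorial * k.factorial := by field_simp
    _ ≤ Real.exp r * k.factorial := by
        apply mul_le_mul_of_nonneg_right this hkf.le
    _ = (k.factorial : ℝ) * Real.exp r := by ring
  calc r ^ k * Real.exp (c * r - r ^ 2 / 2)
      ≤ ((k.factorial : ℝ) * Real.exp r) * Real.exp (c * r - r ^ 2 / 2) := by
        apply mul_le_mul_of_nonneg_right h1 (Real.exp_pos _).le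
    _ = (k.factorial : ℝ) * Real.exp ((c + 1) * r - r ^ 2 / 2) := by
        rw [mul_assoc, ← Real.exp_add]; ring_nf
    _ ≤ (k.factorial : ℝ) * (Real.exp ((c + 1) ^ 2) * Real.exp (-(1/4) * r ^ 2)) := by
        apply mul_le_mul_of_nonneg_left _ (by positivity)
        rw [← Real.exp_add]
        apply Real.exp_le_exp.2
        nlinarith [sq_nonneg ((c+1) - r/2)]
    _ = _ := by ring

lemma Kk_exp_bound {t r : ℝ} (hr : 0 ≤ r) :
    Real.exp (-(r - t) ^ 2 / 2) ≤ Real.exp (|t| * r - r ^ 2 / 2) := by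
  apply Real.exp_le_exp.2
  have : t * r ≤ |t| * r := mul_le_mul_of_nonneg_right (le_abs_self t) hr
  nlinarith [sq_nonneg t]

lemma Kk_integrableOn (k : ℕ) (t : ℝ) :
    IntegrableOn (fun r : ℝ => r ^ k * Real.exp (-(r - t) ^ 2 / 2)) (Ioi 0) := by
  apply Integrable.mono'
    (g := fun r => (k.factorial : ℝ) * Real.exp ((|t| + 1) ^ 2) * Real.exp (-(1/4) * r ^ 2))
  · exact (((integrable_exp_neg_mul_sq (by norm_num : (0:ℝ) < 1/4)).const_mul _)).integrableOn
  · exact (Kk_cont k t).aestronglyMeasurable.restrict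
  · filter_upwards [ae_restrict_mem measurableSet_Ioi] with r hr
    have hr0 : (0:ℝ) ≤ r := le_of_lt hr
    rw [Real.norm_eq_abs, abs_of_nonneg (by positivity)]
    calc r ^ k * Real.exp (-(r - t) ^ 2 / 2) ≤ r ^ k * Real.exp (|t| * r - r ^ 2 / 2) :=
          mul_le_mul_of_nonneg_left (Kk_exp_bound hr0) (by positivity)
      _ ≤ _ := Kk_core_bound k (abs_nonneg t) hr0




lemma Kk_tendsto_zero (k : ℕ) (t : ℝ) :
    Tendsto (fun r : ℝ => r ^ k * Real.exp (-(r - t) ^ 2 / 2)) atTop (nhds 0) := by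
  have hb : Tendsto (fun r : ℝ => (k.factorial : ℝ) * Real.exp ((|t| + 1) ^ 2) *
      Real.exp (-(1/4) * r ^ 2)) atTop (nhds 0) := by
    rw [show (0:ℝ) = (k.factorial : ℝ) * Real.exp ((|t| + 1) ^ 2) * 0 by ring]
    apply Tendsto.const_mul
    apply Real.tendsto_exp_atBot.comp
    apply Tendsto.const_mul_atTop_of_neg (by norm_num : (-(1/4):ℝ) < 0)
    exact tendsto_pow_atTop (by norm_num)
  apply squeeze_zero' (g := fun r : ℝ => (k.factorial : ℝ) * Real.exp ((|t| + 1) ^ 2) *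
      Real.exp (-(1/4) * r ^ 2)) _ _ hb
  · filter_upwards [eventually_ge_atTop (0:ℝ)] with r hr
    positivity
  · filter_upwards [eventually_ge_atTop (0:ℝ)] with r hr
    calc r ^ k * Real.exp (-(r - t) ^ 2 / 2) ≤ r ^ k * Real.exp (|t| * r - r ^ 2 / 2) :=
          mul_le_mul_of_nonneg_left (Kk_exp_bound hr) (by positivity)
      _ ≤ _ := Kk_core_bound k (abs_nonneg t) hr

lemma exp_term_hasDerivAt (t r : ℝ) :
    HasDerivAt (fun r : ℝ => Real.exp (-(r - t) ^ 2 / 2))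
      (-(r - t) * Real.exp (-(r - t) ^ 2 / 2)) r := by
  have hinner : HasDerivAt (fun r : ℝ => -(r - t) ^ 2 / 2) (-(r - t)) r := by
    have h : HasDerivAt (fun r : ℝ => r - t) 1 r := (hasDerivAt_id r).sub_const t
    have := ((h.pow 2).neg).div_const 2
    refine this.congr_deriv ?_
    simp; ring
  simpa [mul_comm] using hinner.exp

lemma Kk_hasDerivAt_r (k : ℕ) (t r : ℝ) :
    HasDerivAt (fun r : ℝ => r ^ (k+1) * Real.exp (-(r - t) ^ 2 / 2))
      ((k+1 : ℝ) * (r ^ k * Real.exp (-(r - t) ^ 2 / 2))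
        - (r ^ (k+2) * Real.exp (-(r - t) ^ 2 / 2)
           - t * (r ^ (k+1) * Real.exp (-(r - t) ^ 2 / 2)))) r := by
  have h1 : HasDerivAt (fun r : ℝ => r ^ (k+1)) ((k+1 : ℝ) * r ^ k) r := by
    simpa using hasDerivAt_pow (k+1) r
  have := h1.mul (exp_term_hasDerivAt t r)
  refine this.congr_deriv ?_
  ring

lemma Kk_split (k : ℕ) (t : ℝ) :
    ∫ r in Ioi (0:ℝ), ((k+1 : ℝ) * (r ^ k * Real.exp (-(r - t) ^ 2 / 2))
        - (r ^ (k+2) * Real.exp (-(r - t) ^ 2 / 2)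
           - t * (r ^ (k+1) * Real.exp (-(r - t) ^ 2 / 2))))
      = (k+1 : ℝ) * Kk k t - (Kk (k+2) t - t * Kk (k+1) t) := by
  have hB : IntegrableOn (fun r : ℝ => r ^ (k+2) * Real.exp (-(r - t) ^ 2 / 2)
      - t * (r ^ (k+1) * Real.exp (-(r - t) ^ 2 / 2))) (Ioi 0) :=
    (Kk_integrableOn (k+2) t).sub ((Kk_integrableOn (k+1) t).const_mul t)
  rw [integral_sub ((Kk_integrableOn k t).const_mul _) hB,
    integral_sub (Kk_integrableOn (k+2) t) ((Kk_integrableOn (k+1) t).const_mul t),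
    integral_const_mul, integral_const_mul]
  rfl

/-- The key recurrence. -/
lemma Kk_rec (k : ℕ) (t : ℝ) : Kk (k+2) t = (k+1 : ℝ) * Kk k t + t * Kk (k+1) t := by
  have key := integral_Ioi_of_hasDerivAt_of_tendsto
    (f := fun r : ℝ => r ^ (k+1) * Real.exp (-(r - t) ^ 2 / 2))
    (f' := fun r : ℝ => (k+1 : ℝ) * (r ^ k * Real.exp (-(r - t) ^ 2 / 2))
        - (r ^ (k+2) * Real.exp (-(r - t) ^ 2 / 2)
           - t * (r ^ (k+1) * Real.exp (-(r - t) ^ 2 / 2))))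
    (a := 0) (m := 0)
    ((Kk_cont (k+1) t)).continuousWithinAt
    (fun x _ => Kk_hasDerivAt_r k t x)
    (((Kk_integrableOn k t).const_mul _).sub
      ((Kk_integrableOn (k+2) t).sub ((Kk_integrableOn (k+1) t).const_mul t)))
    (Kk_tendsto_zero (k+1) t)
  rw [Kk_split k t] at key
  simp only [zero_pow, Nat.succ_ne_zero, ne_eq, zero_mul, sub_zero, not_false_iff] at key
  linarith

/-- Boundary identity for `k = 0`. -/
lemma Kk_rec0 (t : ℝ) : Kk 1 t = t * Kk 0 t + Real.exp (-t ^ 2 / 2) := by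
  have hint0 : IntegrableOn (fun r : ℝ => t * (r ^ 0 * Real.exp (-(r - t) ^ 2 / 2))
      - r ^ 1 * Real.exp (-(r - t) ^ 2 / 2)) (Ioi 0) :=
    ((Kk_integrableOn 0 t).const_mul t).sub (Kk_integrableOn 1 t)
  have hint : IntegrableOn (fun r : ℝ => -(r - t) * Real.exp (-(r - t) ^ 2 / 2)) (Ioi 0) := by
    apply hint0.congr_fun ?_ measurableSet_Ioi
    intro x _; simp; ring
  have htend : Tendsto (fun r : ℝ => Real.exp (-(r - t) ^ 2 / 2)) atTop (nhds 0) := by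
    apply Real.tendsto_exp_atBot.comp
    have h2 : Tendsto (fun r : ℝ => (r - t) ^ 2) atTop atTop :=
      (tendsto_pow_atTop (two_ne_zero)).comp (tendsto_atTop_add_const_right _ _ tendsto_id)
    have := (tendsto_neg_atBot_iff.2 h2).atBot_div_const (by norm_num : (0:ℝ) < 2)
    simpa [neg_div] using this
  have key := integral_Ioi_of_hasDerivAt_of_tendsto
    (f := fun r : ℝ => Real.exp (-(r - t) ^ 2 / 2))
    (f' := fun r : ℝ => -(r - t) * Real.exp (-(r - t) ^ 2 / 2))
    (a := 0) (m := 0)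
    (Real.continuous_exp.comp (by fun_prop) : Continuous fun r : ℝ =>
      Real.exp (-(r - t) ^ 2 / 2)).continuousWithinAt
    (fun x _ => exp_term_hasDerivAt t x)
    hint htend
  have e1 : ∫ r in Ioi (0:ℝ), -(r - t) * Real.exp (-(r - t) ^ 2 / 2)
      = t * Kk 0 t - Kk 1 t := by
    rw [show (fun r : ℝ => -(r - t) * Real.exp (-(r - t) ^ 2 / 2))
        = fun r : ℝ => t * (r ^ 0 * Real.exp (-(r - t) ^ 2 / 2))
            - r ^ 1 * Real.exp (-(r - t) ^ 2 / 2) by funext r; simp; ring]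
    rw [integral_sub ((Kk_integrableOn 0 t).const_mul t) (Kk_integrableOn 1 t),
      integral_const_mul]
    rfl
  rw [e1] at key
  simp only [zero_sub, neg_sq] at key
  linarith




lemma Kk_nonneg (k : ℕ) (t : ℝ) : 0 ≤ Kk k t :=
  setIntegral_nonneg measurableSet_Ioi fun r hr => by
    have : (0:ℝ) < r := hr
    positivity

/-- Derivative of `Kk k` in `t`. -/
lemma Kk_hasDerivAt (k : ℕ) (t : ℝ) :
    HasDerivAt (Kk k) (Kk (k+1) t - t * Kk k t) t := by
  set c : ℝ := |t| + 1 with hc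
  have hc0 : 0 ≤ c := by rw [hc]; positivity
  clear_value c
  have key := hasDerivAt_integral_of_dominated_loc_of_deriv_le
    (μ := volume.restrict (Ioi (0:ℝ))) (x₀ := t) (s := ball t 1) (ball_mem_nhds t one_pos)
    (F := fun t' r => r ^ k * Real.exp (-(r - t') ^ 2 / 2))
    (F' := fun t' r => r ^ k * ((r - t') * Real.exp (-(r - t') ^ 2 / 2)))
    (bound := fun r => ((k+1).factorial + c * k.factorial : ℝ) * Real.exp ((c + 1) ^ 2)
        * Real.exp (-(1/4) * r ^ 2))
    ?_ ?_ ?_ ?_ ?_ ?_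
  · obtain ⟨-, hder⟩ := key
    have hval : (∫ r in Ioi (0:ℝ), r ^ k * ((r - t) * Real.exp (-(r - t) ^ 2 / 2)))
        = Kk (k+1) t - t * Kk k t := by
      rw [show (fun r : ℝ => r ^ k * ((r - t) * Real.exp (-(r - t) ^ 2 / 2)))
          = fun r : ℝ => r ^ (k+1) * Real.exp (-(r - t) ^ 2 / 2)
              - t * (r ^ k * Real.exp (-(r - t) ^ 2 / 2)) by funext r; ring]
      rw [integral_sub (Kk_integrableOn (k+1) t) ((Kk_integrableOn k t).const_mul t),
        integral_const_mul]
      rfl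
    rw [hval] at hder
    exact hder
  · filter_upwards with t'
    exact (Kk_cont k t').aestronglyMeasurable.restrict
  · exact Kk_integrableOn k t
  · exact (Continuous.aestronglyMeasurable (by fun_prop)).restrict
  · filter_upwards [ae_restrict_mem measurableSet_Ioi] with r hr t' ht'
    have hr0 : (0:ℝ) ≤ r := le_of_lt hr
    have habs : |t'| ≤ c := by
      have h := mem_ball_iff_norm.1 ht'
      rw [Real.norm_eq_abs] at h
      have h2 := abs_sub_abs_le_abs_sub t' t
      rw [hc]
      linarith
    have h1 : Real.exp (-(r - t') ^ 2 / 2) ≤ Real.exp (c * r - r ^ 2 / 2) := by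
      refine (Kk_exp_bound hr0).trans (Real.exp_le_exp.2 ?_)
      have h3 : |t'| * r ≤ c * r := mul_le_mul_of_nonneg_right habs hr0
      linarith
    have h2 : |r - t'| ≤ r + c := by
      have h4 := abs_add_le r (-t')
      rw [abs_neg] at h4
      rw [sub_eq_add_neg]
      refine h4.trans ?_
      rw [abs_of_nonneg hr0]
      linarith
    rw [Real.norm_eq_abs, abs_mul, abs_mul, abs_of_nonneg (pow_nonneg hr0 k),
      abs_of_nonneg (Real.exp_pos _).le]
    calc r ^ k * (|r - t'| * Real.exp (-(r - t') ^ 2 / 2))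
        ≤ r ^ k * ((r + c) * Real.exp (c * r - r ^ 2 / 2)) := by
          apply mul_le_mul_of_nonneg_left _ (pow_nonneg hr0 k)
          apply mul_le_mul h2 h1 (Real.exp_pos _).le (by linarith)
      _ = r ^ (k+1) * Real.exp (c * r - r ^ 2 / 2)
          + c * (r ^ k * Real.exp (c * r - r ^ 2 / 2)) := by ring
      _ ≤ ((k+1).factorial : ℝ) * Real.exp ((c + 1) ^ 2) * Real.exp (-(1/4) * r ^ 2)
          + c * ((k.factorial : ℝ) * Real.exp ((c + 1) ^ 2) * Real.exp (-(1/4) * r ^ 2)) := by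
          have b1 := Kk_core_bound (k+1) hc0 hr0
          have b2 := Kk_core_bound k hc0 hr0
          have := mul_le_mul_of_nonneg_left b2 hc0
          linarith
      _ = _ := by push_cast; ring
  · exact ((integrable_exp_neg_mul_sq (by norm_num : (0:ℝ) < 1/4)).const_mul _).integrableOn
  · filter_upwards with r t' ht'
    have h1 : HasDerivAt (fun t' : ℝ => -(r - t') ^ 2 / 2) (r - t') t' := by
      have h : HasDerivAt (fun t' : ℝ => r - t') (-1) t' := by
        simpa using (hasDerivAt_id t').const_sub r
      have := ((h.pow 2).neg).div_const 2
      refine this.congr_deriv ?_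
      norm_num
    have h2 := (h1.exp).const_mul (r ^ k)
    refine h2.congr_deriv ?_
    ring

lemma Kk_deriv_succ (k : ℕ) (t : ℝ) :
    HasDerivAt (Kk (k+1)) ((k+1 : ℝ) * Kk k t) t := by
  have h := Kk_hasDerivAt (k+1) t
  have e : Kk (k+2) t - t * Kk (k+1) t = (k+1 : ℝ) * Kk k t := by
    rw [Kk_rec]; ring
  rwa [e] at h

lemma Kk_deriv0 (t : ℝ) : HasDerivAt (Kk 0) (Real.exp (-t ^ 2 / 2)) t := by
  have h := Kk_hasDerivAt 0 t
  have e : Kk 1 t - t * Kk 0 t = Real.exp (-t ^ 2 / 2) := by rw [Kk_rec0]; ring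
  rwa [e] at h

/-- Nonnegative quadratic in `lam`. -/
lemma Kk_quad (k : ℕ) (t lam : ℝ) :
    0 ≤ Kk (k+2) t - 2 * lam * Kk (k+1) t + lam ^ 2 * Kk k t := by
  have hpt : 0 ≤ ∫ r in Ioi (0:ℝ), (r ^ (k+2) * Real.exp (-(r - t) ^ 2 / 2)
      - 2 * lam * (r ^ (k+1) * Real.exp (-(r - t) ^ 2 / 2))
      + lam ^ 2 * (r ^ k * Real.exp (-(r - t) ^ 2 / 2))) := by
    apply setIntegral_nonneg measurableSet_Ioi
    intro r hr
    have hr0 : (0:ℝ) < r := hr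
    have : r ^ (k+2) * Real.exp (-(r - t) ^ 2 / 2)
      - 2 * lam * (r ^ (k+1) * Real.exp (-(r - t) ^ 2 / 2))
      + lam ^ 2 * (r ^ k * Real.exp (-(r - t) ^ 2 / 2))
      = r ^ k * (r - lam) ^ 2 * Real.exp (-(r - t) ^ 2 / 2) := by ring
    rw [this]
    positivity
  have hAB : IntegrableOn (fun r : ℝ => r ^ (k+2) * Real.exp (-(r - t) ^ 2 / 2)
      - 2 * lam * (r ^ (k+1) * Real.exp (-(r - t) ^ 2 / 2))) (Ioi 0) :=
    (Kk_integrableOn (k+2) t).sub ((Kk_integrableOn (k+1) t).const_mul _)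
  rw [integral_add hAB ((Kk_integrableOn k t).const_mul _),
    integral_sub (Kk_integrableOn (k+2) t) ((Kk_integrableOn (k+1) t).const_mul _),
    integral_const_mul, integral_const_mul] at hpt
  exact hpt

/-- Cauchy–Schwarz-type ratio bound, for `t ≤ 0`. -/
lemma Kk_ratio (k : ℕ) {t : ℝ} (ht : t ≤ 0) :
    Kk (k+1) t ≤ Real.sqrt (k+1) * Kk k t := by
  have hq := Kk_quad k t (Real.sqrt (k+1))
  have hs : Real.sqrt (k+1) ^ 2 = (k+1 : ℝ) := Real.sq_sqrt (by positivity)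
  have hrec := Kk_rec k t
  have h1 : t * Kk (k+1) t ≤ 0 := mul_nonpos_of_nonpos_of_nonneg ht (Kk_nonneg _ _)
  rw [hs] at hq
  have h2 : 2 * Real.sqrt (k+1) * Kk (k+1) t ≤ 2 * (k+1 : ℝ) * Kk k t := by linarith
  have hsp : 0 < Real.sqrt (k+1) := Real.sqrt_pos.2 (by positivity)
  have h3 : (2 * Real.sqrt (k+1)) * Kk (k+1) t
      ≤ (2 * Real.sqrt (k+1)) * (Real.sqrt (k+1) * Kk k t) := by
    calc (2 * Real.sqrt (k+1)) * Kk (k+1) t = 2 * Real.sqrt (k+1) * Kk (k+1) t := by ring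
      _ ≤ 2 * (k+1 : ℝ) * Kk k t := h2
      _ = (2 * Real.sqrt (k+1)) * (Real.sqrt (k+1) * Kk k t) := by
          have e : (2 * Real.sqrt (k+1)) * (Real.sqrt (k+1) * Kk k t)
              = 2 * (Real.sqrt (k+1) ^ 2) * Kk k t := by ring
          rw [e, hs]
  exact le_of_mul_le_mul_left h3 (by positivity)




lemma mono_from_deriv {f f' : ℝ → ℝ} (h : ∀ x, HasDerivAt f (f' x) x)
    (h' : ∀ x, 0 ≤ x → 0 ≤ f' x) {a : ℝ} (ha : 0 ≤ a) : f 0 ≤ f a := by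
  have hmono : MonotoneOn f (Ici (0:ℝ)) := by
    apply monotoneOn_of_deriv_nonneg (convex_Ici 0)
    · exact (continuous_iff_continuousAt.2 fun x => (h x).differentiableAt.continuousAt).continuousOn
    · exact fun x _ => (h x).differentiableAt.differentiableWithinAt
    · intro x hx
      rw [interior_Ici] at hx
      rw [(h x).deriv]
      exact h' x (le_of_lt hx)
  exact hmono self_mem_Ici ha ha

lemma anti_from_deriv {f f' : ℝ → ℝ} (h : ∀ x, HasDerivAt f (f' x) x)
    (h' : ∀ x, 0 ≤ x → f' x ≤ 0) {a : ℝ} (ha : 0 ≤ a) : f a ≤ f 0 := by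
  have h2 := mono_from_deriv (f := fun x => -f x) (f' := fun x => -f' x)
    (fun x => (h x).neg) (fun x hx => neg_nonneg.2 (h' x hx)) ha
  simp only [neg_le_neg_iff] at h2
  linarith [h2]

lemma Kk00 : Kk 0 0 = Real.sqrt (π / 2) := by
  have h : Kk 0 0 = ∫ r in Ioi (0:ℝ), Real.exp (-(1/2) * r ^ 2) := by
    unfold Kk
    apply setIntegral_congr_fun measurableSet_Ioi
    intro r _
    simp only [pow_zero, one_mul, sub_zero]
    ring_nf
  have h4 : Real.sqrt (4:ℝ) = 2 := by
    rw [show (4:ℝ) = 2^2 by norm_num, Real.sqrt_sq (by norm_num)]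
  rw [h, integral_gaussian_Ioi, show π / (1/2:ℝ) = (π/2)*4 by ring,
    Real.sqrt_mul (by positivity), h4]
  ring

lemma Kk10 : Kk 1 0 = 1 := by
  have := Kk_rec0 0
  simpa using this

lemma Kk0_ge (d : ℝ) (hd : 0 ≤ d) : Real.sqrt (π/2) ≤ Kk 0 d := by
  rw [← Kk00]
  exact mono_from_deriv (f' := fun t => Real.exp (-t^2/2)) Kk_deriv0
    (fun x _ => (Real.exp_pos _).le) hd

lemma sqrt_pi_half_ge_one : (1:ℝ) ≤ Real.sqrt (π/2) := by
  rw [show (1:ℝ) = Real.sqrt 1 by rw [Real.sqrt_one]]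
  apply Real.sqrt_le_sqrt
  nlinarith [Real.pi_gt_three]

/-- derivative of `x ↦ exp (x^2/2 + c*x)`. -/
lemma expquad_hasDerivAt (c x : ℝ) :
    HasDerivAt (fun x : ℝ => Real.exp (x^2/2 + c*x)) ((x + c) * Real.exp (x^2/2 + c*x)) x := by
  have h1 : HasDerivAt (fun x : ℝ => x^2/2 + c*x) (x + c) x := by
    have ha := (hasDerivAt_pow 2 x).div_const 2
    have hb := (hasDerivAt_id x).const_mul c
    have := ha.add hb
    refine this.congr_deriv ?_
    norm_num
  simpa [mul_comm] using h1.exp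

/-- derivative of `x ↦ Kk N (-x)`. -/
lemma Kkneg_hasDerivAt (N : ℕ) (x : ℝ) :
    HasDerivAt (fun x : ℝ => Kk N (-x)) (-(Kk (N+1) (-x)) - x * Kk N (-x)) x := by
  have h := (Kk_hasDerivAt N (-x)).comp x (hasDerivAt_neg x)
  refine h.congr_deriv ?_
  simp [Function.comp]
  ring

/-- Part 1 key bound. -/
lemma part1_key (N : ℕ) {τ : ℝ} (hτ : 0 ≤ τ) :
    Kk N 0 * Real.exp (-τ^2/2 - τ * Real.sqrt (N+1)) ≤ Kk N (-τ) := by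
  set c : ℝ := Real.sqrt (N+1) with hc
  have hcn : 0 ≤ c := Real.sqrt_nonneg _
  have hder : ∀ x : ℝ, HasDerivAt (fun x : ℝ => Kk N (-x) * Real.exp (x^2/2 + c*x))
      (Real.exp (x^2/2 + c*x) * (c * Kk N (-x) - Kk (N+1) (-x))) x := by
    intro x
    have := (Kkneg_hasDerivAt N x).mul (expquad_hasDerivAt c x)
    refine this.congr_deriv ?_
    ring
  have hpos : ∀ x : ℝ, 0 ≤ x →
      0 ≤ Real.exp (x^2/2 + c*x) * (c * Kk N (-x) - Kk (N+1) (-x)) := by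
    intro x hx
    apply mul_nonneg (Real.exp_pos _).le
    have := Kk_ratio N (t := -x) (by linarith)
    rw [← hc] at this
    linarith
  have hmono := mono_from_deriv hder hpos hτ
  simp only [neg_zero] at hmono
  rw [show (0:ℝ)^2/2 + c*0 = 0 by ring, Real.exp_zero, mul_one] at hmono
  have hE : Real.exp (-τ^2/2 - τ*c) = (Real.exp (τ^2/2 + c*τ))⁻¹ := by
    rw [← Real.exp_neg]; congr 1; ring
  rw [hE]
  have hEpos : (0:ℝ) < Real.exp (τ^2/2 + c*τ) := Real.exp_pos _
  calc Kk N 0 * (Real.exp (τ^2/2 + c*τ))⁻¹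
      ≤ (Kk N (-τ) * Real.exp (τ^2/2 + c*τ)) * (Real.exp (τ^2/2 + c*τ))⁻¹ := by
        apply mul_le_mul_of_nonneg_right hmono (by positivity)
    _ = Kk N (-τ) := by field_simp

/-- The chain of claims for part 2. -/
lemma part2_chain (M : ℕ) : ∀ j : ℕ, j ≤ M → ∀ d : ℝ, 0 ≤ d →
    ((j:ℝ)+1) * Kk j d ≤ Real.sqrt ((M:ℝ)+2) * Kk (j+1) d := by
  have hsM : (1:ℝ) ≤ Real.sqrt ((M:ℝ)+2) := by
    rw [show (1:ℝ) = Real.sqrt 1 by rw [Real.sqrt_one]]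
    apply Real.sqrt_le_sqrt; push_cast; linarith
  intro j
  induction j with
  | zero =>
    intro _ d hd
    -- H x = Kk 0 x - √(M+2) * Kk 1 x is antitone and H 0 ≤ 0
    have hH : ∀ x : ℝ, HasDerivAt (fun x => Kk 0 x - Real.sqrt ((M:ℝ)+2) * Kk 1 x)
        (Real.exp (-x^2/2) - Real.sqrt ((M:ℝ)+2) * (((0:ℕ):ℝ)+1) * Kk 0 x) x := by
      intro x
      have := (Kk_deriv0 x).sub ((Kk_deriv_succ 0 x).const_mul (Real.sqrt ((M:ℝ)+2)))
      refine this.congr_deriv ?_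
      ring
    have hH' : ∀ x : ℝ, 0 ≤ x →
        Real.exp (-x^2/2) - Real.sqrt ((M:ℝ)+2) * (((0:ℕ):ℝ)+1) * Kk 0 x ≤ 0 := by
      intro x hx
      have h1 : Real.exp (-x^2/2) ≤ 1 := Real.exp_le_one_iff.2 (by nlinarith)
      have h2 : (1:ℝ) ≤ Real.sqrt ((M:ℝ)+2) * Kk 0 x := by
        have := (Kk0_ge x hx)
        nlinarith [sqrt_pi_half_ge_one]
      push_cast
      nlinarith
    have hanti := anti_from_deriv hH hH' hd
    have hH0 : Kk 0 0 - Real.sqrt ((M:ℝ)+2) * Kk 1 0 ≤ 0 := by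
      rw [Kk00, Kk10, mul_one]
      have : Real.sqrt (π/2) ≤ Real.sqrt ((M:ℝ)+2) := by
        apply Real.sqrt_le_sqrt
        nlinarith [Real.pi_le_four]
      linarith
    push_cast
    linarith
  | succ j ih =>
    intro hj d hd
    have hCj := ih (by omega)
    have hH : ∀ x : ℝ, HasDerivAt
        (fun x => ((j:ℝ)+2) * Kk (j+1) x - Real.sqrt ((M:ℝ)+2) * Kk (j+2) x)
        (((j:ℝ)+2) * (((j:ℝ)+1) * Kk j x)
          - Real.sqrt ((M:ℝ)+2) * (((j:ℝ)+2) * Kk (j+1) x)) x := by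
      intro x
      have hd1 := (Kk_deriv_succ j x).const_mul ((j:ℝ)+2)
      have hd2 := (Kk_deriv_succ (j+1) x).const_mul (Real.sqrt ((M:ℝ)+2))
      have := hd1.sub hd2
      refine this.congr_deriv ?_
      push_cast
      ring
    have hH' : ∀ x : ℝ, 0 ≤ x →
        ((j:ℝ)+2) * (((j:ℝ)+1) * Kk j x)
          - Real.sqrt ((M:ℝ)+2) * (((j:ℝ)+2) * Kk (j+1) x) ≤ 0 := by
      intro x hx
      have := hCj x hx
      nlinarith [this]
    have hanti := anti_from_deriv hH hH' hd
    have hH0 : ((j:ℝ)+2) * Kk (j+1) 0 - Real.sqrt ((M:ℝ)+2) * Kk (j+2) 0 ≤ 0 := by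
      have hrec : Kk (j+3) 0 = ((j:ℝ)+2) * Kk (j+1) 0 := by
        have := Kk_rec (j+1) 0
        push_cast at this ⊢
        linarith
      have hrat : Kk (j+3) 0 ≤ Real.sqrt ((j:ℝ)+3) * Kk (j+2) 0 := by
        have := Kk_ratio (j+2) (t := 0) le_rfl
        push_cast at this ⊢
        convert this using 3 <;> ring
      have hmon : Real.sqrt ((j:ℝ)+3) ≤ Real.sqrt ((M:ℝ)+2) := by
        apply Real.sqrt_le_sqrt
        have : (j:ℝ) + 1 ≤ (M:ℝ) := by exact_mod_cast hj
        linarith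
      have hnn := Kk_nonneg (j+2) 0
      nlinarith
    push_cast
    linarith
/-- Part 2 key bound. -/
lemma part2_key (N : ℕ) {d : ℝ} (hd : 0 ≤ d) :
    Kk N d ≤ Kk N 0 * Real.exp (Real.sqrt ((N:ℝ)+1) * d) := by
  have main : ∀ x : ℝ, 0 ≤ x → Kk N x * Real.exp (-(Real.sqrt ((N:ℝ)+1)) * x) ≤ Kk N 0 := by
    intro x hx
    set c : ℝ := Real.sqrt ((N:ℝ)+1) with hc
    have hc1 : 1 ≤ c := by
      have h1 : Real.sqrt 1 ≤ Real.sqrt ((N:ℝ)+1) := Real.sqrt_le_sqrt (by push_cast; linarith)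
      rw [Real.sqrt_one] at h1
      rw [hc]; exact h1
    have hexp : ∀ y : ℝ, HasDerivAt (fun y : ℝ => Real.exp (-c * y))
        (-c * Real.exp (-c * y)) y := by
      intro y
      have h1 : HasDerivAt (fun y : ℝ => -c * y) (-c) y := by
        simpa using (hasDerivAt_id y).const_mul (-c)
      simpa [mul_comm] using h1.exp
    rcases Nat.eq_zero_or_pos N with hN | hN
    · subst hN
      have hder : ∀ y : ℝ, HasDerivAt (fun y => Kk 0 y * Real.exp (-c * y))
          (Real.exp (-y^2/2) * Real.exp (-c*y) + Kk 0 y * (-c * Real.exp (-c*y))) y :=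
        fun y => (Kk_deriv0 y).mul (hexp y)
      have hder' : ∀ y : ℝ, 0 ≤ y →
          Real.exp (-y^2/2) * Real.exp (-c*y) + Kk 0 y * (-c * Real.exp (-c*y)) ≤ 0 := by
        intro y hy
        have h1 : Real.exp (-y^2/2) ≤ 1 := Real.exp_le_one_iff.2 (by nlinarith)
        have h2 : (1:ℝ) ≤ c * Kk 0 y := by nlinarith [Kk0_ge y hy, sqrt_pi_half_ge_one]
        have h3 : (0:ℝ) < Real.exp (-c*y) := Real.exp_pos _
        clear_value c
        nlinarith [mul_le_mul_of_nonneg_right h1 h3.le, mul_le_mul_of_nonneg_right h2 h3.le]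
      have := anti_from_deriv hder hder' hx
      simp only [mul_zero, Real.exp_zero, mul_one] at this
      exact this
    · obtain ⟨M, rfl⟩ : ∃ M, N = M + 1 := ⟨N - 1, by omega⟩
      have hchain := part2_chain M M le_rfl
      have hder : ∀ y : ℝ, HasDerivAt (fun y => Kk (M+1) y * Real.exp (-c * y))
          (((M:ℝ)+1) * Kk M y * Real.exp (-c*y) + Kk (M+1) y * (-c * Real.exp (-c*y))) y :=
        fun y => (Kk_deriv_succ M y).mul (hexp y)
      have hder' : ∀ y : ℝ, 0 ≤ y →
          ((M:ℝ)+1) * Kk M y * Real.exp (-c*y) + Kk (M+1) y * (-c * Real.exp (-c*y)) ≤ 0 := by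
        intro y hy
        have h1 := hchain y hy
        have hcM : c = Real.sqrt ((M:ℝ)+2) := by rw [hc]; congr 1; push_cast; ring
        rw [← hcM] at h1
        have h3 : (0:ℝ) < Real.exp (-c*y) := Real.exp_pos _
        nlinarith
      have := anti_from_deriv hder hder' hx
      simp only [mul_zero, Real.exp_zero, mul_one] at this
      exact this
  have h := main d hd
  have hEpos : (0:ℝ) < Real.exp (-(Real.sqrt ((N:ℝ)+1)) * d) := Real.exp_pos _
  have hinv : Real.exp (Real.sqrt ((N:ℝ)+1) * d)
      = (Real.exp (-(Real.sqrt ((N:ℝ)+1)) * d))⁻¹ := by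
    rw [← Real.exp_neg]; congr 1; ring
  rw [hinv]
  calc Kk N d = Kk N d * Real.exp (-(Real.sqrt ((N:ℝ)+1)) * d)
      * (Real.exp (-(Real.sqrt ((N:ℝ)+1)) * d))⁻¹ := by field_simp
    _ ≤ Kk N 0 * (Real.exp (-(Real.sqrt ((N:ℝ)+1)) * d))⁻¹ := by
      apply mul_le_mul_of_nonneg_right h (by positivity)



/-- Radial disintegration of an integral of a radial function over a measurable cone. -/
lemma radial_cone_integral {n : ℕ} (hn : 1 ≤ n) (T : Set (EuclideanSpace ℝ (Fin n)))
    (hTm : MeasurableSet T)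
    (hcone : ∀ c : ℝ, 0 < c → ∀ x, x ∈ T → c • x ∈ T)
    (f : ℝ → ℝ) (hf : Measurable f) :
    ∫ x in T, f ‖x‖ =
      ((volume : Measure (EuclideanSpace ℝ (Fin n))).toSphere
          (Subtype.val ⁻¹' T)).toReal * ∫ r in Ioi (0:ℝ), r ^ (n-1) * f r := by
  have hfr : Module.finrank ℝ (EuclideanSpace ℝ (Fin n)) = n := by simp
  haveI hnt : Nontrivial (EuclideanSpace ℝ (Fin n)) :=
    Module.nontrivial_of_finrank_pos (R := ℝ) (by omega : 0 < Module.finrank ℝ (EuclideanSpace ℝ (Fin n)))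
  haveI : NullSingletonClass (volume : Measure (EuclideanSpace ℝ (Fin n))) := by infer_instance
  have hcone' : ∀ c : ℝ, 0 < c → ∀ x : EuclideanSpace ℝ (Fin n), (c • x ∈ T ↔ x ∈ T) := by
    intro c hc x
    constructor
    · intro h
      have h2 := hcone c⁻¹ (by positivity) _ h
      rwa [smul_smul, inv_mul_cancel₀ (ne_of_gt hc), one_smul] at h2
    · exact hcone c hc x
  set F : EuclideanSpace ℝ (Fin n) → ℝ := T.indicator (fun x => f ‖x‖) with hF
  have step1 : ∫ x in T, f ‖x‖ = ∫ x, F x := (integral_indicator hTm).symm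
  have step2 : ∫ x, F x =
      ∫ x : ({0}ᶜ : Set (EuclideanSpace ℝ (Fin n))), F x.1
        ∂(Measure.comap Subtype.val volume) := by
    rw [integral_subtype_comap (measurableSet_singleton (0:EuclideanSpace ℝ (Fin n))).compl F,
      restrict_compl_singleton]
  set S : Set (sphere (0:EuclideanSpace ℝ (Fin n)) 1) := Subtype.val ⁻¹' T with hS
  set G : sphere (0:EuclideanSpace ℝ (Fin n)) 1 × Ioi (0:ℝ) → ℝ :=
    fun p => S.indicator (fun _ => (1:ℝ)) p.1 * f p.2 with hG
  have step3 : ∫ x : ({0}ᶜ : Set (EuclideanSpace ℝ (Fin n))), F x.1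
        ∂(Measure.comap Subtype.val volume)
      = ∫ p, G p ∂((volume : Measure (EuclideanSpace ℝ (Fin n))).toSphere.prod
          (Measure.volumeIoiPow (Module.finrank ℝ (EuclideanSpace ℝ (Fin n)) - 1))) := by
    rw [← (volume : Measure (EuclideanSpace ℝ (Fin n))).measurePreserving_homeomorphUnitSphereProd.integral_comp
      (Homeomorph.measurableEmbedding _) G]
    apply integral_congr_ae
    filter_upwards with x
    show F x.1 = G (homeomorphUnitSphereProd _ x)
    have hx0 : x.1 ≠ 0 := x.2
    have hnx : (0:ℝ) < ‖x.1‖ := norm_pos_iff.2 hx0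
    have hmem : (‖x.1‖⁻¹ • x.1 ∈ T) ↔ x.1 ∈ T := hcone' _ (by positivity) x.1
    by_cases hxT : x.1 ∈ T
    · rw [hF, hG]
      simp only [indicator_of_mem hxT]
      have : (homeomorphUnitSphereProd _ x).1 ∈ S := by
        rw [hS]
        simp only [mem_preimage, homeomorphUnitSphereProd_apply_fst_coe]
        exact hmem.2 hxT
      rw [indicator_of_mem this, one_mul]
      simp [homeomorphUnitSphereProd_apply_snd_coe]
    · rw [hF, hG]
      simp only [indicator_of_notMem hxT]
      have : (homeomorphUnitSphereProd _ x).1 ∉ S := by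
        rw [hS]
        simp only [mem_preimage, homeomorphUnitSphereProd_apply_fst_coe]
        exact fun h => hxT (hmem.1 h)
      rw [indicator_of_notMem this, zero_mul]
  have step4 : ∫ p, G p ∂((volume : Measure (EuclideanSpace ℝ (Fin n))).toSphere.prod
          (Measure.volumeIoiPow (Module.finrank ℝ (EuclideanSpace ℝ (Fin n)) - 1)))
      = (∫ ω, S.indicator (fun _ => (1:ℝ)) ω
            ∂(volume : Measure (EuclideanSpace ℝ (Fin n))).toSphere)
        * ∫ r : Ioi (0:ℝ), f r ∂(Measure.volumeIoiPow
            (Module.finrank ℝ (EuclideanSpace ℝ (Fin n)) - 1)) := by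
    rw [hG]
    exact integral_prod_mul (μ := (volume : Measure (EuclideanSpace ℝ (Fin n))).toSphere)
      (ν := Measure.volumeIoiPow (Module.finrank ℝ (EuclideanSpace ℝ (Fin n)) - 1))
      (L := ℝ) (fun ω => S.indicator (fun _ => (1:ℝ)) ω) (fun r => f r)
  have hSm : MeasurableSet S := hTm.preimage measurable_subtype_coe
  have step5 : ∫ ω, S.indicator (fun _ => (1:ℝ)) ω
      ∂(volume : Measure (EuclideanSpace ℝ (Fin n))).toSphere
      = ((volume : Measure (EuclideanSpace ℝ (Fin n))).toSphere S).toReal := by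
    rw [integral_indicator hSm]
    simp
    rfl
  have step6 : ∫ r : Ioi (0:ℝ), f r ∂(Measure.volumeIoiPow
        (Module.finrank ℝ (EuclideanSpace ℝ (Fin n)) - 1))
      = ∫ r in Ioi (0:ℝ), r ^ (n-1) * f r := by
    rw [Measure.volumeIoiPow]
    simp only [ENNReal.ofReal]
    rw [integral_withDensity_eq_integral_smul
      ((measurable_subtype_coe.pow_const _).real_toNNReal) (fun r : Ioi (0:ℝ) => f r)]
    rw [integral_subtype_comap measurableSet_Ioi
      (fun a : ℝ => Real.toNNReal (a ^ (Module.finrank ℝ (EuclideanSpace ℝ (Fin n)) - 1)) • f a)]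
    apply setIntegral_congr_fun measurableSet_Ioi
    intro x hx
    have hx0 : (0:ℝ) < x := hx
    simp only [hfr, NNReal.smul_def, Real.coe_toNNReal _ (pow_nonneg hx0.le _), smul_eq_mul]
  rw [step1, step2, step3, step4, step5, step6]

/-- integrability of gaussian-type functions on Euclidean space -/
lemma integrable_gauss_exp (n : ℕ) (t : ℝ) :
    Integrable (fun y : EuclideanSpace ℝ (Fin n) => Real.exp (-‖y‖^2/2 + t*‖y‖)) := by
  have hbase : Integrable (fun y : EuclideanSpace ℝ (Fin n) => Real.exp (-(1/4:ℝ)*‖y‖^2)) := by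
    have h := GaussianFourier.integrable_cexp_neg_mul_sq_norm_add
      (V := EuclideanSpace ℝ (Fin n)) (b := (1/4:ℂ)) (by norm_num) 0 0
    have h2 := h.norm
    apply h2.congr
    filter_upwards with v
    rw [Complex.norm_exp]
    congr 1
    simp [← Complex.ofReal_pow]
  apply (hbase.const_mul (Real.exp (t^2))).mono'
    (Continuous.aestronglyMeasurable (by fun_prop))
  filter_upwards with y
  rw [Real.norm_eq_abs, abs_of_nonneg (Real.exp_pos _).le, ← Real.exp_add]
  apply Real.exp_le_exp.2
  nlinarith [sq_nonneg (t - ‖y‖/2), norm_nonneg y]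


end KTheoryAux

lemma gauss_nonneg {n : ℕ} (B : Set (EuclideanSpace ℝ (Fin n))) : 0 ≤ gauss B :=
  integral_nonneg fun x => by positivity

set_option maxHeartbeats 2000000 in

set_option maxHeartbeats 2000000 in
/-- Bound via representer vectors at a nondegenerate vertex. The rows `s i` of the
invertible matrix `S` are the inward unit facet normals of `T = N(z)`, and the representer
`w̃` of `w` is characterized by `S w̃ = (S w)₊`. -/
theorem stmt11 {n m : ℕ} (A : Fin m → EuclideanSpace ℝ (Fin n)) (b : Fin m → ℝ)
    (Q : Set (EuclideanSpace ℝ (Fin n)))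
    (hQ : Q = {x | ∀ i, ⟪A i, x⟫ ≤ b i}) (hne : Q.Nonempty)
    (z : EuclideanSpace ℝ (Fin n)) (hz : z ∈ Set.extremePoints ℝ Q)
    -- nondegeneracy: exactly `n` active constraints, with linearly independent rows
    (hcard : {i | ⟪A i, z⟫ = b i}.ncard = n)
    (hind : LinearIndependent ℝ (fun i : {i : Fin m // ⟪A i, z⟫ = b i} => A i.1))
    -- the inward unit facet normals of `T = N(z)`, forming an invertible matrix `S`
    (s : Fin n → EuclideanSpace ℝ (Fin n)) (hs : ∀ i, ‖s i‖ = 1)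
    (hsind : LinearIndependent ℝ s)
    (hT : normalCone Q z = {y | ∀ i, 0 ≤ ⟪s i, y⟫})
    (D : Set (EuclideanSpace ℝ (Fin n))) (ψ : EuclideanSpace ℝ (Fin n) → ℝ)
    (hDne : D.Nonempty) (hψ : ConvexOn ℝ D ψ)
    (ε : ℝ) (hε : 0 ≤ ε) :
    (∀ w ∈ subdiffScaled ε D ψ z, ∀ wt : EuclideanSpace ℝ (Fin n),
      (∀ i, ⟪s i, wt⟫ = max ⟪s i, w⟫ 0) →
      gauss (normalCone Q z) * Real.exp (-‖wt‖ ^ 2 / 2 - ‖wt‖ * Real.sqrt n) ≤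
        gauss (normalCone Q z ∩ (normalCone Q z + subdiffScaled ε D ψ z))) ∧
    (∀ v : EuclideanSpace ℝ (Fin n), HasGradientAt ψ v z →
      ∀ wt : EuclideanSpace ℝ (Fin n), (∀ i, ⟪s i, wt⟫ = max ⟪s i, ε • v⟫ 0) →
      ∀ p : EuclideanSpace ℝ (Fin n), p ∈ dualCone (normalCone Q z) →
        (∀ a ∈ dualCone (normalCone Q z), dist wt p ≤ dist wt a) →
      gauss (normalCone Q z ∩ ((· + ε • v) '' normalCone Q z)) ≤
        gauss (normalCone Q z) *
          Real.exp (-‖p‖ ^ 2 / 2 +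
            infDist wt (dualCone (normalCone Q z)) * Real.sqrt n)) := by
  set T := normalCone Q z with hTdef
  have hmem : ∀ y, y ∈ T ↔ ∀ i, 0 ≤ ⟪s i, y⟫ := fun y => by rw [hT]; exact Iff.rfl
  have hTadd : ∀ x y, x ∈ T → y ∈ T → x + y ∈ T := by
    intro x y hx hy
    rw [hmem] at *
    intro i
    rw [inner_add_right]
    exact add_nonneg (hx i) (hy i)
  rcases eq_or_ne n 0 with rfl | hn0
  -- degenerate case n = 0
  · haveI : Subsingleton (EuclideanSpace ℝ (Fin 0)) :=
      ⟨fun a b => PiLp.ext fun i => i.elim0⟩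
    constructor
    · intro w hw wt hwt
      have hwt0 : wt = 0 := Subsingleton.elim _ _
      have hsub2 : T ⊆ T + subdiffScaled ε D ψ z := by
        intro x hx
        have hx2 : x = x + w := Subsingleton.elim _ _
        rw [hx2]
        exact Set.add_mem_add hx hw
      rw [Set.inter_eq_left.mpr hsub2, hwt0]
      simp
    · intro v hv wt hwt p hp hmin
      have himg : (· + ε • v) '' T = T := by
        have h1 : (fun x : EuclideanSpace ℝ (Fin 0) => x + ε • v) = id :=
          funext fun x => Subsingleton.elim _ _
        rw [h1, Set.image_id]
      have hp0 : p = 0 := Subsingleton.elim _ _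
      rw [himg, Set.inter_self, hp0]
      simp
  -- main case : n ≥ 1
  · obtain ⟨N, rfl⟩ : ∃ N, n = N + 1 := ⟨n - 1, by omega⟩
    have hn : 1 ≤ N + 1 := by omega
    have hTm : MeasurableSet T := by
      rw [hT]
      have h1 : {y : EuclideanSpace ℝ (Fin (N+1)) | ∀ i, 0 ≤ ⟪s i, y⟫}
          = ⋂ i, {y | 0 ≤ ⟪s i, y⟫} := by
        ext y; simp [Set.mem_iInter]
      rw [h1]
      refine MeasurableSet.iInter fun i => ?_
      have hc : Continuous fun y : EuclideanSpace ℝ (Fin (N+1)) => ⟪s i, y⟫ :=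
        Continuous.inner continuous_const continuous_id
      exact measurableSet_le measurable_const hc.measurable
    have hTcone : ∀ c : ℝ, 0 < c → ∀ x, x ∈ T → c • x ∈ T := by
      intro c hc x hx
      rw [hmem] at *
      intro i
      rw [real_inner_smul_right]
      exact mul_nonneg hc.le (hx i)
    set c0 : ℝ := (2 * Real.pi) ^ (-((N+1 : ℕ) : ℝ) / 2) with hc0
    have hc0pos : (0:ℝ) < c0 := Real.rpow_pos_of_pos (by positivity) _
    have hgauss_eq : ∀ B : Set (EuclideanSpace ℝ (Fin (N+1))),
        gauss B = ∫ x in B, c0 * Real.exp (-‖x‖ ^ 2 / 2) := by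
      intro B; rw [hc0]; rfl
    set σ : ℝ := ((volume : Measure (EuclideanSpace ℝ (Fin (N+1)))).toSphere
        (Subtype.val ⁻¹' T)).toReal with hσdef
    have hσ : 0 ≤ σ := ENNReal.toReal_nonneg
    -- integrability
    have hIsub : ∀ t : ℝ, Integrable (fun y : EuclideanSpace ℝ (Fin (N+1)) =>
        c0 * Real.exp (-‖y‖ ^ 2 / 2) * Real.exp (t * ‖y‖)) := by
      intro t
      apply ((integrable_gauss_exp (N+1) t).const_mul c0).congr
      filter_upwards with y
      rw [mul_assoc, ← Real.exp_add]
    have hIgauss : Integrable (fun y : EuclideanSpace ℝ (Fin (N+1)) =>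
        c0 * Real.exp (-‖y‖ ^ 2 / 2)) := by
      apply (hIsub 0).congr
      filter_upwards with y
      norm_num
    have hIshift : ∀ wv : EuclideanSpace ℝ (Fin (N+1)), Integrable
        (fun y : EuclideanSpace ℝ (Fin (N+1)) => c0 * Real.exp (-‖y + wv‖ ^ 2 / 2)) := by
      intro wv
      exact ((measurePreserving_add_right volume wv).integrable_comp
        hIgauss.aestronglyMeasurable).2 hIgauss
    -- shift formula
    have hshift : ∀ wv : EuclideanSpace ℝ (Fin (N+1)),
        gauss ((fun y => y + wv) '' T) = ∫ y in T, c0 * Real.exp (-‖y + wv‖ ^ 2 / 2) := by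
      intro wv
      rw [hgauss_eq]
      exact (measurePreserving_add_right volume wv).setIntegral_image_emb
        (measurableEmbedding_addRight wv) (fun x => c0 * Real.exp (-‖x‖ ^ 2 / 2)) T
    -- radial formula
    have hA : ∀ t : ℝ, (∫ y in T, c0 * Real.exp (-‖y‖ ^ 2 / 2) * Real.exp (t * ‖y‖))
        = σ * (c0 * (Real.exp (t ^ 2 / 2) * Kk N t)) := by
      intro t
      have h1 := radial_cone_integral hn T hTm hTcone
        (fun r => c0 * Real.exp (-r ^ 2 / 2) * Real.exp (t * r))
        (Continuous.measurable (by fun_prop))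
      simp only [Nat.add_sub_cancel] at h1
      rw [hσdef]
      refine h1.trans ?_
      congr 1
      have h2 : (fun r : ℝ => r ^ N * (c0 * Real.exp (-r ^ 2 / 2) * Real.exp (t * r)))
          = fun r : ℝ => (c0 * Real.exp (t ^ 2 / 2)) * (r ^ N * Real.exp (-(r - t) ^ 2 / 2)) := by
        funext r
        rw [show c0 * Real.exp (-r ^ 2 / 2) * Real.exp (t * r)
            = c0 * Real.exp (-r ^ 2 / 2 + t * r) by rw [mul_assoc, ← Real.exp_add]
        , show (c0 * Real.exp (t ^ 2 / 2)) * (r ^ N * Real.exp (-(r - t) ^ 2 / 2))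
            = r ^ N * (c0 * (Real.exp (t ^ 2 / 2) * Real.exp (-(r - t) ^ 2 / 2))) by ring
        , ← Real.exp_add]
        have : -r ^ 2 / 2 + t * r = t ^ 2 / 2 + -(r - t) ^ 2 / 2 := by ring
        rw [this]
      rw [h2, integral_const_mul]
      unfold Kk
      ring
    have hgaussT : gauss T = σ * (c0 * Kk N 0) := by
      rw [hgauss_eq]
      have h0 : (∫ y in T, c0 * Real.exp (-‖y‖ ^ 2 / 2))
          = ∫ y in T, c0 * Real.exp (-‖y‖ ^ 2 / 2) * Real.exp (0 * ‖y‖) := by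
        apply setIntegral_congr_fun hTm
        intro y _
        norm_num
      rw [h0, hA 0]
      norm_num
    constructor
    -- ================== PART 1 ==================
    · intro w hw wt hwt
      have hwtT : wt ∈ T := (hmem wt).2 fun i => by rw [hwt i]; exact le_max_right _ _
      have hsubset : (fun y => y + wt) '' T ⊆ T ∩ (T + subdiffScaled ε D ψ z) := by
        rintro x ⟨y, hy, rfl⟩
        constructor
        · exact hTadd _ _ hy hwtT
        · show y + wt ∈ T + subdiffScaled ε D ψ z
          have hd : y + wt = (y + (wt - w)) + w := by abel
          rw [hd]
          refine Set.add_mem_add (hTadd _ _ hy ?_) hw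
          rw [hmem]
          intro i
          rw [inner_sub_right, hwt i]
          have := le_max_left (⟪s i, w⟫) 0
          linarith
      have hτ : (0:ℝ) ≤ ‖wt‖ := norm_nonneg _
      have hsq : Real.sqrt (↑(N+1)) = Real.sqrt ((N:ℝ)+1) := by push_cast; ring_nf
      calc gauss T * Real.exp (-‖wt‖ ^ 2 / 2 - ‖wt‖ * Real.sqrt (↑(N+1)))
          = (σ * c0) * (Kk N 0 * Real.exp (-‖wt‖ ^ 2 / 2 - ‖wt‖ * Real.sqrt ((N:ℝ)+1))) := by
            rw [hgaussT, hsq]; ring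
        _ ≤ (σ * c0) * Kk N (-‖wt‖) := by
            apply mul_le_mul_of_nonneg_left _ (mul_nonneg hσ hc0pos.le)
            exact part1_key N hτ
        _ = Real.exp (-‖wt‖ ^ 2 / 2) * (σ * (c0 * (Real.exp ((-‖wt‖) ^ 2 / 2) * Kk N (-‖wt‖)))) := by
            rw [show ((-‖wt‖ : ℝ)) ^ 2 = ‖wt‖ ^ 2 by ring,
              show Real.exp (-‖wt‖ ^ 2 / 2) * (σ * (c0 * (Real.exp (‖wt‖ ^ 2 / 2) * Kk N (-‖wt‖))))
                = (Real.exp (-‖wt‖ ^ 2 / 2) * Real.exp (‖wt‖ ^ 2 / 2)) * (σ * (c0 * Kk N (-‖wt‖)))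
                by ring, ← Real.exp_add,
              show -‖wt‖ ^ 2 / 2 + ‖wt‖ ^ 2 / 2 = (0:ℝ) by ring, Real.exp_zero, one_mul]
            ring
        _ = Real.exp (-‖wt‖ ^ 2 / 2) *
              ∫ y in T, c0 * Real.exp (-‖y‖ ^ 2 / 2) * Real.exp ((-‖wt‖) * ‖y‖) := by
            rw [hA (-‖wt‖)]
        _ = ∫ y in T, Real.exp (-‖wt‖ ^ 2 / 2) *
              (c0 * Real.exp (-‖y‖ ^ 2 / 2) * Real.exp ((-‖wt‖) * ‖y‖)) := by
            rw [integral_const_mul]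
        _ ≤ ∫ y in T, c0 * Real.exp (-‖y + wt‖ ^ 2 / 2) := by
            apply setIntegral_mono_on
              ((hIsub (-‖wt‖)).const_mul (Real.exp (-‖wt‖ ^ 2 / 2))).integrableOn
              (hIshift wt).integrableOn hTm
            intro y _
            have hcs : ⟪y, wt⟫ ≤ ‖y‖ * ‖wt‖ := real_inner_le_norm y wt
            have hexpand : ‖y + wt‖ ^ 2 = ‖y‖ ^ 2 + 2 * ⟪y, wt⟫ + ‖wt‖ ^ 2 :=
              norm_add_sq_real y wt
            show Real.exp (-‖wt‖ ^ 2 / 2) *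
                (c0 * Real.exp (-‖y‖ ^ 2 / 2) * Real.exp ((-‖wt‖) * ‖y‖))
                ≤ c0 * Real.exp (-‖y + wt‖ ^ 2 / 2)
            rw [show Real.exp (-‖wt‖ ^ 2 / 2) *
                (c0 * Real.exp (-‖y‖ ^ 2 / 2) * Real.exp ((-‖wt‖) * ‖y‖))
                = c0 * Real.exp (-‖y‖ ^ 2 / 2 + (-‖wt‖) * ‖y‖ + -‖wt‖ ^ 2 / 2) by
              rw [Real.exp_add, Real.exp_add]; ring]
            apply mul_le_mul_of_nonneg_left _ hc0pos.le
            apply Real.exp_le_exp.2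
            rw [hexpand]
            nlinarith
        _ = gauss ((fun y => y + wt) '' T) := (hshift wt).symm
        _ ≤ gauss (T ∩ (T + subdiffScaled ε D ψ z)) := by
            rw [hgauss_eq, hgauss_eq]
            apply setIntegral_mono_set hIgauss.integrableOn
            · filter_upwards with y
              positivity
            · exact HasSubset.Subset.eventuallyLE hsubset
    -- ================== PART 2 ==================
    · intro v hv wt hwt p hp hmin
      have hwtT : wt ∈ T := (hmem wt).2 fun i => by rw [hwt i]; exact le_max_right _ _
      have h0dual : (0 : EuclideanSpace ℝ (Fin (N+1))) ∈ dualCone T := by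
        intro x hx
        rw [inner_zero_right]
      have hseteq : T ∩ ((· + ε • v) '' T) = (fun y => y + wt) '' T := by
        ext x
        constructor
        · rintro ⟨hxT, y, hyT, rfl⟩
          refine ⟨y + ε • v - wt, ?_, by abel⟩
          rw [hmem]
          intro i
          rw [inner_sub_right, hwt i]
          rcases le_or_gt (⟪s i, ε • v⟫) 0 with h | h
          · rw [max_eq_right h]
            have := (hmem _).1 hxT i
            linarith
          · rw [max_eq_left h.le, inner_add_right]
            have := (hmem _).1 hyT i
            linarith
        · rintro ⟨y, hyT, rfl⟩
          refine ⟨hTadd _ _ hyT hwtT, y + wt - ε • v, ?_, by abel⟩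
          rw [hmem]
          intro i
          rw [inner_sub_right, inner_add_right, hwt i]
          have h1 := le_max_left (⟪s i, ε • v⟫) 0
          have h2 := (hmem _).1 hyT i
          linarith
      have hdist : dist wt p = ‖wt - p‖ := dist_eq_norm _ _
      have hinfd : infDist wt (dualCone T) = ‖wt - p‖ := by
        apply le_antisymm
        · rw [← hdist]
          exact infDist_le_dist_of_mem hp
        · by_contra hlt
          push_neg at hlt
          obtain ⟨a, ha, hlt'⟩ := (infDist_lt_iff ⟨0, h0dual⟩).1 hlt
          have := hmin a ha
          rw [hdist] at this
          linarith
      have hpw : 0 ≤ ⟪p, wt - p⟫ := by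
        by_contra hneg
        push_neg at hneg
        have hip := real_inner_comm p (wt - p)
        have hp0 : p ≠ 0 := by
          intro h
          rw [h, inner_zero_left] at hneg
          exact absurd hneg (lt_irrefl 0)
        have hpn : (0:ℝ) < ‖p‖ ^ 2 := by
          have := norm_pos_iff.2 hp0
          positivity
        set t0 : ℝ := min 1 (-⟪p, wt - p⟫ / ‖p‖ ^ 2) with ht0
        have ht0pos : 0 < t0 := lt_min one_pos (div_pos (neg_pos.2 hneg) hpn)
        have ht0le1 : t0 ≤ 1 := min_le_left _ _
        have ht0le2 : t0 * ‖p‖ ^ 2 ≤ -⟪p, wt - p⟫ := by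
          have := min_le_right 1 (-⟪p, wt - p⟫ / ‖p‖ ^ 2)
          rw [← ht0] at this
          calc t0 * ‖p‖ ^ 2 ≤ (-⟪p, wt - p⟫ / ‖p‖ ^ 2) * ‖p‖ ^ 2 :=
                mul_le_mul_of_nonneg_right this hpn.le
            _ = -⟪p, wt - p⟫ := by field_simp
        have hmemd : (1 - t0) • p ∈ dualCone T := by
          intro x hx
          rw [real_inner_smul_right]
          exact mul_nonneg (by linarith) (hp x hx)
        have h1 := hmin _ hmemd
        rw [hdist, dist_eq_norm] at h1
        have hrw : wt - (1 - t0) • p = (wt - p) + t0 • p := by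
          rw [sub_smul, one_smul]
          abel
        rw [hrw] at h1
        have h2 : ‖wt - p‖ ^ 2 ≤ ‖(wt - p) + t0 • p‖ ^ 2 :=
          pow_le_pow_left₀ (norm_nonneg _) h1 2
        rw [norm_add_sq_real, real_inner_smul_right, norm_smul, Real.norm_eq_abs,
          abs_of_pos ht0pos, mul_pow] at h2
        have h3 : 2 * ⟪p, wt - p⟫ + t0 * ‖p‖ ^ 2 ≤ ⟪p, wt - p⟫ := by linarith
        have h4 : t0 * (2 * ⟪p, wt - p⟫ + t0 * ‖p‖ ^ 2) < 0 :=
          mul_neg_of_pos_of_neg ht0pos (lt_of_le_of_lt h3 hneg)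
        rw [hip] at h2
        nlinarith
      have hnorm2 : ‖p‖ ^ 2 + ‖wt - p‖ ^ 2 ≤ ‖wt‖ ^ 2 := by
        have h1 := norm_add_sq_real p (wt - p)
        rw [add_sub_cancel] at h1
        linarith
      have hd0 : (0:ℝ) ≤ ‖wt - p‖ := norm_nonneg _
      have hsq : Real.sqrt (↑(N+1)) = Real.sqrt ((N:ℝ)+1) := by push_cast; ring_nf
      calc gauss (T ∩ ((· + ε • v) '' T)) = gauss ((fun y => y + wt) '' T) := by rw [hseteq]
        _ = ∫ y in T, c0 * Real.exp (-‖y + wt‖ ^ 2 / 2) := hshift wt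
        _ ≤ ∫ y in T, Real.exp (-‖wt‖ ^ 2 / 2) *
              (c0 * Real.exp (-‖y‖ ^ 2 / 2) * Real.exp (‖wt - p‖ * ‖y‖)) := by
            apply setIntegral_mono_on (hIshift wt).integrableOn
              ((hIsub (‖wt - p‖)).const_mul (Real.exp (-‖wt‖ ^ 2 / 2))).integrableOn hTm
            intro y hy
            have hyp : 0 ≤ ⟪y, p⟫ := hp y hy
            have hcs : |⟪y, wt - p⟫| ≤ ‖y‖ * ‖wt - p‖ := abs_real_inner_le_norm y (wt - p)
            have hsub : ⟪y, wt - p⟫ = ⟪y, wt⟫ - ⟪y, p⟫ := inner_sub_right y wt p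
            have hexpand : ‖y + wt‖ ^ 2 = ‖y‖ ^ 2 + 2 * ⟪y, wt⟫ + ‖wt‖ ^ 2 :=
              norm_add_sq_real y wt
            show c0 * Real.exp (-‖y + wt‖ ^ 2 / 2) ≤ Real.exp (-‖wt‖ ^ 2 / 2) *
                (c0 * Real.exp (-‖y‖ ^ 2 / 2) * Real.exp (‖wt - p‖ * ‖y‖))
            rw [show Real.exp (-‖wt‖ ^ 2 / 2) *
                (c0 * Real.exp (-‖y‖ ^ 2 / 2) * Real.exp (‖wt - p‖ * ‖y‖))
                = c0 * Real.exp (-‖y‖ ^ 2 / 2 + ‖wt - p‖ * ‖y‖ + -‖wt‖ ^ 2 / 2) by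
              rw [Real.exp_add, Real.exp_add]; ring]
            apply mul_le_mul_of_nonneg_left _ hc0pos.le
            apply Real.exp_le_exp.2
            rw [hexpand]
            have habs := abs_le.1 hcs
            nlinarith [habs.1]
        _ = Real.exp (-‖wt‖ ^ 2 / 2) *
              (σ * (c0 * (Real.exp (‖wt - p‖ ^ 2 / 2) * Kk N (‖wt - p‖)))) := by
            rw [integral_const_mul, hA (‖wt - p‖)]
        _ ≤ Real.exp (-‖wt‖ ^ 2 / 2) *
              (σ * (c0 * (Real.exp (‖wt - p‖ ^ 2 / 2) *
                (Kk N 0 * Real.exp (Real.sqrt ((N:ℝ)+1) * ‖wt - p‖))))) := by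
            apply mul_le_mul_of_nonneg_left _ (Real.exp_pos _).le
            apply mul_le_mul_of_nonneg_left _ hσ
            apply mul_le_mul_of_nonneg_left _ hc0pos.le
            apply mul_le_mul_of_nonneg_left _ (Real.exp_pos _).le
            exact part2_key N hd0
        _ = gauss T * (Real.exp (-‖wt‖ ^ 2 / 2) * Real.exp (‖wt - p‖ ^ 2 / 2) *
              Real.exp (Real.sqrt ((N:ℝ)+1) * ‖wt - p‖)) := by
            rw [hgaussT]; ring
        _ = gauss T * Real.exp (-‖wt‖ ^ 2 / 2 + ‖wt - p‖ ^ 2 / 2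
              + Real.sqrt ((N:ℝ)+1) * ‖wt - p‖) := by
            rw [Real.exp_add, Real.exp_add]
        _ ≤ gauss T * Real.exp (-‖p‖ ^ 2 / 2
              + infDist wt (dualCone T) * Real.sqrt (↑(N+1))) := by
            apply mul_le_mul_of_nonneg_left _ (gauss_nonneg T)
            apply Real.exp_le_exp.2
            rw [hinfd, hsq]
            have : Real.sqrt ((N:ℝ)+1) * ‖wt - p‖ = ‖wt - p‖ * Real.sqrt ((N:ℝ)+1) := by ring
            linarith [hnorm2]
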